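/- For D = 4: there exist constants c > 0 and C ≥ 0 such that for every u ∈ ℝ⁴ with |u| ≥ 2 and fixed cutoff K > 0, ∫_{|k| ≤ K} (sin²(k·u)/|k|⁴) dk ≥ c·log|u| - C. -/

import Mathlib

open MeasureTheory
open scoped RealInnerProductSpace

theorem aux_sin_sq_int (a r : ℝ) (ha : 0 < a) (hr : 4 / a ≤ r) :
    r / 4 ≤ ∫ t in Set.Ioc r (2 * r), Real.sin (a * t) ^ 2 := by
  have hr0 : 0 < r := lt_of_lt_of_le (by positivity) hr
  have h1 : r ≤ 2 * r := by linarith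
  rw [← intervalIntegral.integral_of_le h1]
  have := intervalIntegral.integral_comp_mul_left (a := r) (b := 2*r) (fun t => Real.sin t ^ 2) (ne_of_gt ha)
  rw [this, integral_sin_sq]
  have hb1 : Real.sin (a*r) * Real.cos (a*r) ≥ -1 := by nlinarith [Real.neg_one_le_sin (a*r), Real.sin_le_one (a*r), Real.neg_one_le_cos (a*r), Real.cos_le_one (a*r)]
  have hb2 : Real.sin (a*(2*r)) * Real.cos (a*(2*r)) ≤ 1 := by nlinarith [Real.neg_one_le_sin (a*(2*r)), Real.sin_le_one (a*(2*r)), Real.neg_one_le_cos (a*(2*r)), Real.cos_le_one (a*(2*r))]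
  have har : 4 ≤ a * r := by rw [div_le_iff₀ ha] at hr; linarith
  rw [smul_eq_mul]
  rw [ge_iff_le, ← sub_nonneg] at hb1
  have : (Real.sin (a*r) * Real.cos (a*r) - Real.sin (a*(2*r)) * Real.cos (a*(2*r)) + a*(2*r) - a*r)/2 ≥ (a*r - 2)/2 := by linarith
  have h2 : a⁻¹ * ((a*r - 2)/2) ≥ r/4 := by
    rw [ge_iff_le, le_inv_mul_iff₀ ha]
    nlinarith
  calc r/4 ≤ a⁻¹ * ((a*r-2)/2) := h2
    _ ≤ _ := by
        apply mul_le_mul_of_nonneg_left (by linarith) (by positivity)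


theorem pointwise_bound (a t y0 y1 y2 : ℝ) (h0 : y0 ≠ 0) (h1 : y1 ≠ 0) (h2 : y2 ≠ 0) :
    Real.sin (a * t) ^ 2 / (t ^ 2 + (y0 ^ 2 + y1 ^ 2 + y2 ^ 2)) ^ 2
      ≤ a ^ 2 * ((t ^ 2) ^ ((1:ℝ)/5) *
        ((y0 ^ 2) ^ (-(2/5) : ℝ) * ((y1 ^ 2) ^ (-(2/5) : ℝ) * (y2 ^ 2) ^ (-(2/5) : ℝ)))) := by
  rcases eq_or_ne t 0 with ht | ht
  · simp [ht]
  have ht2 : (0:ℝ) < t ^ 2 := by positivity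
  have hy0 : (0:ℝ) < y0 ^ 2 := by positivity
  have hy1 : (0:ℝ) < y1 ^ 2 := by positivity
  have hy2 : (0:ℝ) < y2 ^ 2 := by positivity
  set D : ℝ := t ^ 2 + (y0 ^ 2 + y1 ^ 2 + y2 ^ 2) with hD
  have hDpos : 0 < D := by positivity
  set G : ℝ := (t ^ 2) ^ ((2:ℝ)/5) * (y0 ^ 2) ^ ((1:ℝ)/5) * (y1 ^ 2) ^ ((1:ℝ)/5) *
      (y2 ^ 2) ^ ((1:ℝ)/5) with hG
  have hGpos : 0 < G := by positivity
  have hAMGM : G ≤ D := by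
    have h := Real.geom_mean_le_arith_mean4_weighted
      (w₁ := 2/5) (w₂ := 1/5) (w₃ := 1/5) (w₄ := 1/5)
      (p₁ := t ^ 2) (p₂ := y0 ^ 2) (p₃ := y1 ^ 2) (p₄ := y2 ^ 2)
      (by norm_num) (by norm_num) (by norm_num) (by norm_num)
      ht2.le hy0.le hy1.le hy2.le (by norm_num)
    calc G ≤ 2/5 * t ^ 2 + 1/5 * y0 ^ 2 + 1/5 * y1 ^ 2 + 1/5 * y2 ^ 2 := by
            rw [hG]; convert h using 2 <;> norm_num
      _ ≤ D := by rw [hD]; nlinarith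
  have hsin : Real.sin (a * t) ^ 2 ≤ a ^ 2 * t ^ 2 := by
    have habs : |Real.sin (a*t)| ≤ |a*t| := Real.abs_sin_le_abs
    calc Real.sin (a*t) ^ 2 = |Real.sin (a*t)| ^ 2 := (sq_abs _).symm
      _ ≤ |a*t| ^ 2 := by gcongr
      _ = a ^ 2 * t ^ 2 := by rw [abs_mul, mul_pow, sq_abs, sq_abs]
  have hG2 : 0 < G ^ 2 := by positivity
  have key : Real.sin (a * t) ^ 2 / D ^ 2 ≤ a ^ 2 * t ^ 2 / G ^ 2 := by
    apply div_le_div₀ (by positivity) hsin hG2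
    gcongr
  refine key.trans (le_of_eq ?_)
  have sqr : ∀ x : ℝ, 0 ≤ x → ∀ c : ℝ, (x ^ c) ^ 2 = x ^ (c * 2) := fun x hx c => by
    rw [← Real.rpow_natCast (x ^ c) 2, ← Real.rpow_mul hx]
    norm_num
  have hG2e : G ^ 2 = (t^2)^((4:ℝ)/5) * ((y0^2)^((2:ℝ)/5) * ((y1^2)^((2:ℝ)/5) * (y2^2)^((2:ℝ)/5))) := by
    rw [hG, mul_pow, mul_pow, mul_pow, sqr _ ht2.le, sqr _ hy0.le, sqr _ hy1.le, sqr _ hy2.le]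
    norm_num
    ring
  rw [hG2e]
  rw [show ((1:ℝ)/5) = 1 - 4/5 by norm_num, Real.rpow_sub ht2, Real.rpow_one,
    Real.rpow_neg hy0.le, Real.rpow_neg hy1.le, Real.rpow_neg hy2.le]
  field_simp

theorem aux_gK_int (K : ℝ) (hK : 0 < K) :
    IntegrableOn (fun s : ℝ => (s ^ 2) ^ (-(2/5) : ℝ)) (Set.Icc (-K) K) := by
  rw [← intervalIntegrable_iff_integrableOn_Icc_of_le (by linarith)]
  have h0K : IntervalIntegrable (fun s : ℝ => (s ^ 2) ^ (-(2/5) : ℝ)) volume 0 K := by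
    rw [intervalIntegrable_iff_integrableOn_Ioc_of_le hK.le]
    apply IntegrableOn.congr_fun (f := fun s : ℝ => s ^ (-(4/5) : ℝ))
    · rw [← intervalIntegrable_iff_integrableOn_Ioc_of_le hK.le]
      exact intervalIntegral.intervalIntegrable_rpow' (by norm_num)
    · intro s hs
      have hs0 : 0 < s := hs.1
      show s ^ (-(4/5) : ℝ) = (s ^ 2) ^ (-(2/5) : ℝ)
      rw [← Real.rpow_natCast s 2, ← Real.rpow_mul hs0.le]
      norm_num
    · exact measurableSet_Ioc
  have hneg : IntervalIntegrable (fun s : ℝ => (s ^ 2) ^ (-(2/5) : ℝ)) volume (-K) 0 := by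
    have := ((IntervalIntegrable.iff_comp_neg (f := fun s : ℝ => (s ^ 2) ^ (-(2/5) : ℝ)) (by simp)).mp h0K)
    simp only [neg_sq] at this
    simpa using this.symm
  exact hneg.trans h0K


noncomputable def Hfun (a : ℝ) : ℝ × (Fin 3 → ℝ) → ℝ :=
  fun p => Real.sin (a * p.1) ^ 2 / (p.1 ^ 2 + ∑ i, p.2 i ^ 2) ^ 2

theorem Hfun_meas (a : ℝ) : Measurable (Hfun a) := by
  unfold Hfun
  fun_prop

theorem Hfun_nonneg (a : ℝ) (p : ℝ × (Fin 3 → ℝ)) : 0 ≤ Hfun a p := by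
  unfold Hfun
  positivity

theorem gK_int (K : ℝ) (hK : 0 < K) :
    IntegrableOn (fun s : ℝ => (s ^ 2) ^ (-(2/5) : ℝ)) (Set.Icc (-K) K) := by
  rw [← intervalIntegrable_iff_integrableOn_Icc_of_le (by linarith)]
  have h0K : IntervalIntegrable (fun s : ℝ => (s ^ 2) ^ (-(2/5) : ℝ)) volume 0 K := by
    rw [intervalIntegrable_iff_integrableOn_Ioc_of_le hK.le]
    apply IntegrableOn.congr_fun (f := fun s : ℝ => s ^ (-(4/5) : ℝ))
    · rw [← intervalIntegrable_iff_integrableOn_Ioc_of_le hK.le]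
      exact intervalIntegral.intervalIntegrable_rpow' (by norm_num)
    · intro s hs
      have hs0 : 0 < s := hs.1
      show s ^ (-(4/5) : ℝ) = (s ^ 2) ^ (-(2/5) : ℝ)
      rw [← Real.rpow_natCast s 2, ← Real.rpow_mul hs0.le]
      norm_num
    · exact measurableSet_Ioc
  have hneg : IntervalIntegrable (fun s : ℝ => (s ^ 2) ^ (-(2/5) : ℝ)) volume (-K) 0 := by
    have := ((IntervalIntegrable.iff_comp_neg (f := fun s : ℝ => (s ^ 2) ^ (-(2/5) : ℝ)) (by simp)).mp h0K)
    simp only [neg_sq] at this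
    simpa using this.symm
  exact hneg.trans h0K


theorem Hfun_integrableOn (K a : ℝ) (hK : 0 < K) :
    IntegrableOn (Hfun a) {p : ℝ × (Fin 3 → ℝ) | p.1 ^ 2 + ∑ i, p.2 i ^ 2 ≤ K ^ 2} := by
  set f : ℝ → ℝ := (Set.Icc (-K) K).indicator (fun t => (t ^ 2) ^ ((1:ℝ)/5)) with hf
  set g : ℝ → ℝ := (Set.Icc (-K) K).indicator (fun s => (s ^ 2) ^ (-(2/5) : ℝ)) with hg
  have hfint : Integrable f := by
    rw [hf, integrable_indicator_iff measurableSet_Icc]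
    apply Continuous.integrableOn_Icc
    exact (continuous_pow 2).rpow_const (fun x => Or.inr (by norm_num))
  have hgint : Integrable g := by
    rw [hg, integrable_indicator_iff measurableSet_Icc]
    exact gK_int K hK
  have hΦint : Integrable (fun z : ℝ × (Fin 3 → ℝ) => a ^ 2 * (f z.1 * ∏ i, g (z.2 i))) := by
    apply Integrable.const_mul
    rw [Measure.volume_eq_prod]
    exact hfint.mul_prod (Integrable.fintype_prod (f := fun _ : Fin 3 => g) (fun i => hgint))
  set T : Set (ℝ × (Fin 3 → ℝ)) := {p | p.1 ^ 2 + ∑ i, p.2 i ^ 2 ≤ K ^ 2} with hT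
  have hTmeas : MeasurableSet T := measurableSet_le (by fun_prop) measurable_const
  apply Integrable.mono' (hΦint.integrableOn) ((Hfun_meas a).aestronglyMeasurable.restrict)
  -- ae bound
  have hae : ∀ᵐ z : ℝ × (Fin 3 → ℝ), ∀ i, z.2 i ≠ 0 := by
    rw [MeasureTheory.ae_iff]
    apply measure_mono_null (t := ⋃ i : Fin 3, {z : ℝ × (Fin 3 → ℝ) | z.2 i = 0})
    · intro z hz
      simp only [Set.mem_setOf_eq, not_forall, not_not] at hz
      obtain ⟨i, hi⟩ := hz
      exact Set.mem_iUnion.mpr ⟨i, hi⟩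
    · apply measure_iUnion_null
      intro i
      have : {z : ℝ × (Fin 3 → ℝ) | z.2 i = 0} = Set.univ ×ˢ {y : Fin 3 → ℝ | y i = 0} := by
        ext z; simp
      rw [this, Measure.volume_eq_prod, Measure.prod_prod]
      rw [show ({y : Fin 3 → ℝ | y i = 0} : Set _) = {y : Fin 3 → ℝ | y i = (0:ℝ)} from rfl]
      have h0 : (volume : Measure (Fin 3 → ℝ)) {y | y i = 0} = 0 := by
        have := Measure.pi_hyperplane (fun _ : Fin 3 => (volume : Measure ℝ)) i (0:ℝ)
        simpa [volume_pi] using this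
      rw [h0, mul_zero]
  filter_upwards [ae_restrict_of_ae hae, ae_restrict_mem hTmeas] with z hz hzT
  have hnorm : ‖Hfun a z‖ = Hfun a z := Real.norm_of_nonneg (Hfun_nonneg a z)
  rw [hnorm]
  -- membership bounds
  have hb : z.1 ^ 2 + ∑ i, z.2 i ^ 2 ≤ K ^ 2 := hzT
  have hsq : ∀ w : ℝ, w ^ 2 ≤ K ^ 2 → w ∈ Set.Icc (-K) K := by
    intro w hw
    constructor
    · nlinarith
    · nlinarith
  have hz1 : z.1 ∈ Set.Icc (-K) K := by
    apply hsq
    have : (0:ℝ) ≤ ∑ i, z.2 i ^ 2 := by positivity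
    linarith
  have hz2 : ∀ i, z.2 i ∈ Set.Icc (-K) K := by
    intro i
    apply hsq
    have h1 : z.2 i ^ 2 ≤ ∑ j, z.2 j ^ 2 :=
      Finset.single_le_sum (f := fun j => z.2 j ^ 2) (fun j _ => by positivity)
        (Finset.mem_univ i)
    have h2 : (0:ℝ) ≤ z.1 ^ 2 := by positivity
    linarith
  have hfz : f z.1 = (z.1 ^ 2) ^ ((1:ℝ)/5) := Set.indicator_of_mem hz1 _
  have hgz : ∀ i, g (z.2 i) = (z.2 i ^ 2) ^ (-(2/5) : ℝ) := fun i =>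
    Set.indicator_of_mem (hz2 i) _
  rw [hfz]
  have hprod : (∏ i, g (z.2 i))
      = (z.2 0 ^ 2) ^ (-(2/5) : ℝ) * ((z.2 1 ^ 2) ^ (-(2/5) : ℝ) * (z.2 2 ^ 2) ^ (-(2/5) : ℝ)) := by
    rw [Fin.prod_univ_three, hgz 0, hgz 1, hgz 2, mul_assoc]
  rw [hprod]
  have hsum3 : (∑ i, z.2 i ^ 2) = z.2 0 ^ 2 + z.2 1 ^ 2 + z.2 2 ^ 2 := Fin.sum_univ_three _
  unfold Hfun
  rw [hsum3]
  exact pointwise_bound a z.1 (z.2 0) (z.2 1) (z.2 2) (hz 0) (hz 1) (hz 2)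


-- per-rectangle bound
theorem rect_bound (a rn : ℝ) (ha : 0 < a) (hrn : 4 / a ≤ rn)
    (hH : IntegrableOn (Hfun a) (Set.Ioc rn (2*rn) ×ˢ Set.pi Set.univ (fun _ : Fin 3 => Set.Icc 0 rn))) :
    1 / 196 ≤ ∫ z in Set.Ioc rn (2*rn) ×ˢ Set.pi Set.univ (fun _ : Fin 3 => Set.Icc 0 rn),
      Hfun a z := by
  have hrpos : 0 < rn := lt_of_lt_of_le (by positivity) hrn
  set S := Set.Ioc rn (2*rn) ×ˢ Set.pi Set.univ (fun _ : Fin 3 => Set.Icc 0 rn) with hS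
  set φ : ℝ × (Fin 3 → ℝ) → ℝ :=
    fun z => Real.sin (a * z.1) ^ 2 / (49 * rn ^ 4) * 1 with hφ
  have hφint : IntegrableOn φ S := by
    rw [hS, IntegrableOn, Measure.volume_eq_prod, ← Measure.prod_restrict]
    apply Integrable.mul_prod (L := ℝ)
      (f := fun t => Real.sin (a * t) ^ 2 / (49 * rn ^ 4)) (g := fun _ => (1:ℝ))
    · apply Integrable.div_const
      apply Integrable.mono' (g := fun _ : ℝ => (1:ℝ))
      · exact integrable_const _
      · exact ((Real.continuous_sin.comp (continuous_const.mul continuous_id)).pow 2).aestronglyMeasurable.restrict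
      · filter_upwards with t
        rw [Real.norm_of_nonneg (by positivity)]
        have := Real.sin_le_one (a * t)
        have := Real.neg_one_le_sin (a * t)
        nlinarith
    · have hfin : (volume (Set.univ.pi fun _ : Fin 3 => Set.Icc (0:ℝ) rn)) < ⊤ := by
        rw [volume_pi_pi]
        simp only [Real.volume_Icc, sub_zero, Finset.prod_const]
        exact ENNReal.pow_lt_top ENNReal.ofReal_lt_top
      exact integrableOn_const hfin.ne
  have hmono : ∫ z in S, φ z ≤ ∫ z in S, Hfun a z := by
    apply setIntegral_mono_on hφint hH
    · rw [hS]
      exact (measurableSet_Ioc.prod (MeasurableSet.univ_pi fun _ => measurableSet_Icc))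
    · intro z hz
      rw [hS, Set.mem_prod] at hz
      obtain ⟨hz1, hz2⟩ := hz
      have ht : rn < z.1 ∧ z.1 ≤ 2 * rn := hz1
      have hy : ∀ i, z.2 i ∈ Set.Icc 0 rn := fun i => hz2 i (Set.mem_univ i)
      have hD1 : rn ^ 2 < z.1 ^ 2 + ∑ i, z.2 i ^ 2 := by
        have h1 : rn ^ 2 < z.1 ^ 2 := by nlinarith [ht.1, hrpos]
        have h2 : (0:ℝ) ≤ ∑ i, z.2 i ^ 2 := by positivity
        linarith
      have hD2 : z.1 ^ 2 + ∑ i, z.2 i ^ 2 ≤ 7 * rn ^ 2 := by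
        have h1 : z.1 ^ 2 ≤ 4 * rn ^ 2 := by nlinarith [ht.1, ht.2, hrpos]
        have h2 : ∑ i, z.2 i ^ 2 ≤ 3 * rn ^ 2 := by
          rw [Fin.sum_univ_three]
          have e0 := hy 0; have e1 := hy 1; have e2 := hy 2
          simp only [Set.mem_Icc] at e0 e1 e2
          nlinarith [e0.1, e0.2, e1.1, e1.2, e2.1, e2.2]
        linarith
      have hDpos : 0 < z.1 ^ 2 + ∑ i, z.2 i ^ 2 := lt_trans (by positivity) hD1
      show Real.sin (a * z.1) ^ 2 / (49 * rn ^ 4) * 1 ≤ _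
      unfold Hfun
      rw [mul_one]
      apply div_le_div_of_nonneg_left (by positivity) (by positivity)
      nlinarith [hD1, hD2, hDpos]
  refine le_trans ?_ hmono
  -- compute ∫ φ over product
  rw [hS, hφ, Measure.volume_eq_prod, setIntegral_prod_mul
    (f := fun t => Real.sin (a * t) ^ 2 / (49 * rn ^ 4)) (g := fun _ => (1:ℝ))]
  rw [setIntegral_const]
  have hvol : (volume (Set.pi Set.univ fun _ : Fin 3 => Set.Icc (0:ℝ) rn)).toReal = rn ^ 3 := by
    rw [volume_pi_pi]
    simp only [Real.volume_Icc, sub_zero]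
    rw [Finset.prod_const]
    rw [← ENNReal.ofReal_pow hrpos.le]
    rw [ENNReal.toReal_ofReal (by positivity)]
    norm_num
  rw [measureReal_def, hvol]
  have hint : ∫ t in Set.Ioc rn (2*rn), Real.sin (a * t) ^ 2 / (49 * rn ^ 4)
      = (∫ t in Set.Ioc rn (2*rn), Real.sin (a * t) ^ 2) / (49 * rn ^ 4) := by
    exact integral_div _ _
  rw [hint]
  have hs := aux_sin_sq_int a rn ha hrn
  rw [smul_eq_mul, mul_one]
  calc (1:ℝ)/196 = (rn / 4) / (49 * rn ^ 4) * rn ^ 3 := by field_simp; ring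
    _ ≤ _ := by
        gcongr

theorem dyadic_bound (K a : ℝ) (hK : 0 < K) (ha : 2 ≤ a) :
    (1 / (196 * Real.log 2)) * Real.log a - ((1 / (196 * Real.log 2)) * |Real.log (K/8)| + 1/196)
      ≤ ∫ p in {p : ℝ × (Fin 3 → ℝ) | p.1 ^ 2 + ∑ i, p.2 i ^ 2 ≤ K ^ 2}, Hfun a p := by
  have ha0 : (0:ℝ) < a := by linarith
  set T : Set (ℝ × (Fin 3 → ℝ)) := {p | p.1 ^ 2 + ∑ i, p.2 i ^ 2 ≤ K ^ 2} with hT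
  have hTmeas : MeasurableSet T := measurableSet_le (by fun_prop) measurable_const
  set r : ℕ → ℝ := fun n => K / 2 ^ (n + 2) with hr
  have hrpos : ∀ n, 0 < r n := fun n => by rw [hr]; positivity
  set R : ℕ → Set (ℝ × (Fin 3 → ℝ)) :=
    fun n => Set.Ioc (r n) (2 * r n) ×ˢ Set.pi Set.univ (fun _ : Fin 3 => Set.Icc 0 (r n)) with hR
  have hRmeas : ∀ n, MeasurableSet (R n) :=
    fun n => measurableSet_Ioc.prod (MeasurableSet.univ_pi fun _ => measurableSet_Icc)
  have hRsubT : ∀ n, R n ⊆ T := by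
    intro n z hz
    obtain ⟨hz1, hz2⟩ := hz
    have ht : r n < z.1 ∧ z.1 ≤ 2 * r n := hz1
    have hy : ∀ i, z.2 i ∈ Set.Icc 0 (r n) := fun i => hz2 i (Set.mem_univ i)
    have hrK : r n ≤ K / 4 := by
      rw [hr]
      apply div_le_div_of_nonneg_left hK.le (by norm_num)
      · calc (4:ℝ) = 2 ^ 2 := by norm_num
          _ ≤ 2 ^ (n + 2) := by
            apply pow_le_pow_right₀ (by norm_num)
            omega
    have hsum : ∑ i, z.2 i ^ 2 ≤ 3 * r n ^ 2 := by
      rw [Fin.sum_univ_three]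
      have e0 := hy 0; have e1 := hy 1; have e2 := hy 2
      simp only [Set.mem_Icc] at e0 e1 e2
      nlinarith [e0.1, e0.2, e1.1, e1.2, e2.1, e2.2]
    show z.1 ^ 2 + ∑ i, z.2 i ^ 2 ≤ K ^ 2
    have h1 : z.1 ^ 2 ≤ 4 * r n ^ 2 := by nlinarith [ht.1, ht.2, hrpos n]
    nlinarith [hrpos n, hK]
  set N : ℕ := ⌊Real.logb 2 (a * K / 8)⌋₊ with hN
  -- the r n ≥ 4/a condition for n < N
  have hcond : ∀ n, n < N → 4 / a ≤ r n := by
    intro n hn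
    have hN1 : 1 ≤ N := by omega
    have hlogb_nonneg : 0 ≤ Real.logb 2 (a * K / 8) := by
      by_contra h
      push_neg at h
      have : N = 0 := by rw [hN, Nat.floor_of_nonpos h.le]
      omega
    have hNle : (N : ℝ) ≤ Real.logb 2 (a * K / 8) := Nat.floor_le hlogb_nonneg
    have hx : (0:ℝ) < a * K / 8 := by positivity
    have h2N : (2:ℝ) ^ ((n:ℝ) + 2) ≤ a * K / 4 := by
      have hexp : (n:ℝ) + 2 ≤ Real.logb 2 (a * K / 8) + 1 := by
        have : (n:ℝ) + 1 ≤ (N:ℝ) := by exact_mod_cast Nat.succ_le_of_lt hn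
        linarith
      calc (2:ℝ) ^ ((n:ℝ) + 2) ≤ (2:ℝ) ^ (Real.logb 2 (a * K / 8) + 1) :=
            Real.rpow_le_rpow_of_exponent_le one_le_two hexp
        _ = (2:ℝ) ^ Real.logb 2 (a * K / 8) * 2 := by
            rw [Real.rpow_add (by norm_num), Real.rpow_one]
        _ = a * K / 8 * 2 := by rw [Real.rpow_logb (by norm_num) (by norm_num) hx]
        _ = a * K / 4 := by ring
    have h2N' : (2:ℝ) ^ (n + 2 : ℕ) ≤ a * K / 4 := by
      rw [← Real.rpow_natCast 2 (n + 2)]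
      push_cast
      exact h2N
    rw [hr, div_le_div_iff₀ ha0 (by positivity)]
    calc 4 * 2 ^ (n + 2) ≤ 4 * (a * K / 4) := by linarith
      _ = K * a := by ring
  -- disjointness
  have hdisj' : ∀ m n : ℕ, m < n → Disjoint (R m) (R n) := by
    intro m n hlt
    rw [Set.disjoint_left]
    rintro z hzm hzn
    have h1 : r m < z.1 := hzm.1.1
    have h2 : z.1 ≤ 2 * r n := hzn.1.2
    have : 2 * r n ≤ r m := by
      rw [hr]
      rw [show 2 * (K / 2 ^ (n + 2)) = K / 2 ^ (n + 1) by
        rw [pow_succ]; field_simp]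
      apply div_le_div_of_nonneg_left hK.le (by positivity)
      apply pow_le_pow_right₀ (by norm_num)
      omega
    linarith
  have hdisj : Set.Pairwise ↑(Finset.range N) (Function.onFun Disjoint R) := by
    intro m _ n _ hmn
    rcases lt_or_gt_of_ne hmn with h | h
    · exact hdisj' m n h
    · exact (hdisj' n m h).symm
  -- integral bound
  have hHint := Hfun_integrableOn K a hK
  have hRint : ∀ n ∈ Finset.range N, IntegrableOn (Hfun a) (R n) :=
    fun n _ => hHint.mono_set (hRsubT n)
  have hUnion : ∫ z in ⋃ n ∈ Finset.range N, R n, Hfun a z = ∑ n ∈ Finset.range N, ∫ z in R n, Hfun a z :=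
    integral_biUnion_finset (Finset.range N) (fun n _ => hRmeas n) hdisj hRint
  have hmono : ∫ z in ⋃ n ∈ Finset.range N, R n, Hfun a z ≤ ∫ z in T, Hfun a z := by
    apply setIntegral_mono_set hHint
    · filter_upwards with z using Hfun_nonneg a z
    · apply HasSubset.Subset.eventuallyLE
      intro z hz
      simp only [Set.mem_iUnion] at hz
      obtain ⟨n, _, hn⟩ := hz
      exact hRsubT n hn
  have hsum : (N : ℝ) / 196 ≤ ∑ n ∈ Finset.range N, ∫ z in R n, Hfun a z := by
    calc (N:ℝ)/196 = ∑ _n ∈ Finset.range N, (1:ℝ)/196 := by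
          rw [Finset.sum_const, Finset.card_range]; ring
      _ ≤ _ := by
          apply Finset.sum_le_sum
          intro n hn
          exact rect_bound a (r n) ha0 (hcond n (Finset.mem_range.mp hn)) (hRint n hn)
  have hfinal : (N:ℝ)/196 ≤ ∫ z in T, Hfun a z := by
    calc (N:ℝ)/196 ≤ ∑ n ∈ Finset.range N, ∫ z in R n, Hfun a z := hsum
      _ = ∫ z in ⋃ n ∈ Finset.range N, R n, Hfun a z := hUnion.symm
      _ ≤ _ := hmono
  refine le_trans ?_ hfinal
  -- arithmetic: c log a - C ≤ N/196
  set c : ℝ := 1 / (196 * Real.log 2) with hc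
  have hlog2 : 0 < Real.log 2 := Real.log_pos (by norm_num)
  have hcpos : 0 < c := by rw [hc]; positivity
  rcases le_or_gt 1 (a * K / 8) with hcase | hcase
  · have hNlb : Real.logb 2 (a * K / 8) - 1 ≤ (N:ℝ) := by
      have := Nat.lt_floor_add_one (Real.logb 2 (a * K / 8))
      rw [← hN] at this
      linarith
    have hlogb : Real.logb 2 (a * K / 8) = (Real.log a + Real.log (K/8)) / Real.log 2 := by
      rw [Real.logb, Real.log_div (by positivity) (by norm_num)]
      rw [show a * K = a * K from rfl]
      rw [show Real.log (a * K) = Real.log a + Real.log K from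
        Real.log_mul (by positivity) (by positivity)]
      rw [Real.log_div (by positivity) (by norm_num)]
      ring
    have h1 : c * Real.log a + c * Real.log (K/8) - 1/196 ≤ (N:ℝ)/196 := by
      have h2 : c * Real.log a + c * Real.log (K/8) = Real.logb 2 (a * K / 8) / 196 := by
        rw [hlogb, hc, div_div]
        ring
      rw [h2]
      linarith [hNlb]
    calc c * Real.log a - (c * |Real.log (K/8)| + 1/196)
        ≤ c * Real.log a + c * Real.log (K/8) - 1/196 := by
          have : -|Real.log (K/8)| ≤ Real.log (K/8) := neg_abs_le _
          nlinarith [hcpos]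
      _ ≤ (N:ℝ)/196 := h1
  · have hNnonneg : (0:ℝ) ≤ (N:ℝ)/196 := by positivity
    refine le_trans ?_ hNnonneg
    have haK : a < 8 / K := by
      rw [div_lt_one (by positivity)] at hcase
      rw [lt_div_iff₀ hK]
      linarith
    have hloga : Real.log a ≤ |Real.log (K/8)| := by
      have h1 : Real.log a < Real.log (8/K) := Real.log_lt_log ha0 haK
      have h2 : Real.log (8/K) = -Real.log (K/8) := by
        rw [← Real.log_inv]
        congr 1
        field_simp
      rw [h2] at h1
      calc Real.log a ≤ -Real.log (K/8) := h1.le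
        _ ≤ |Real.log (K/8)| := neg_le_abs _
    nlinarith [hcpos, hloga]


theorem integral_sin_sq_div_norm_pow_four_lower_bound_dim4 (K : ℝ) (hK : 0 < K) :
    ∃ c C : ℝ, 0 < c ∧ 0 ≤ C ∧
      ∀ u : EuclideanSpace ℝ (Fin 4), 2 ≤ ‖u‖ →
        c * Real.log ‖u‖ - C ≤
          ∫ k in Metric.closedBall (0 : EuclideanSpace ℝ (Fin 4)) K,
            (Real.sin ⟪k, u⟫) ^ 2 / ‖k‖ ^ 4 := by
  have hlog2 : 0 < Real.log 2 := Real.log_pos (by norm_num)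
  refine ⟨1 / (196 * Real.log 2),
    1 / (196 * Real.log 2) * |Real.log (K / 8)| + 1 / 196, by positivity, by positivity, ?_⟩
  intro u hu
  set a := ‖u‖ with ha
  have ha0 : (0:ℝ) < a := by linarith
  -- Step 1: reflection to align u with the first axis
  set v : EuclideanSpace ℝ (Fin 4) := EuclideanSpace.single 0 a with hv
  have hva : ‖v‖ = ‖u‖ := by
    rw [hv, EuclideanSpace.norm_single, Real.norm_eq_abs, abs_of_nonneg (norm_nonneg u)]
  set R := Submodule.reflection (ℝ ∙ (v - u))ᗮ with hR
  have hRv : R v = u := Submodule.reflection_sub hva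
  have step1 : (∫ k in Metric.closedBall (0 : EuclideanSpace ℝ (Fin 4)) K,
      (Real.sin ⟪k, u⟫) ^ 2 / ‖k‖ ^ 4)
      = ∫ k in Metric.closedBall (0 : EuclideanSpace ℝ (Fin 4)) K,
      (Real.sin (a * k 0)) ^ 2 / ‖k‖ ^ 4 := by
    rw [← (R.measurePreserving).setIntegral_preimage_emb
      (R.toHomeomorph.measurableEmbedding)
      (fun k => (Real.sin ⟪k, u⟫) ^ 2 / ‖k‖ ^ 4) _]
    have hpre : R ⁻¹' Metric.closedBall 0 K = Metric.closedBall 0 K := by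
      ext x
      simp [Metric.mem_closedBall, dist_eq_norm]
    rw [hpre]
    apply setIntegral_congr_fun (measurableSet_closedBall)
    intro k _
    have h1 : ⟪R k, u⟫ = a * k 0 := by
      rw [← hRv, LinearIsometryEquiv.inner_map_map, hv]
      rw [EuclideanSpace.inner_single_right]
      simp [mul_comm]
    dsimp only
    rw [h1, LinearIsometryEquiv.norm_map]
  -- Step 2: to the Pi space
  have step2 : (∫ k in Metric.closedBall (0 : EuclideanSpace ℝ (Fin 4)) K,
      (Real.sin (a * k 0)) ^ 2 / ‖k‖ ^ 4)
      = ∫ x in {x : Fin 4 → ℝ | ∑ i, x i ^ 2 ≤ K ^ 2},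
          Real.sin (a * x 0) ^ 2 / (∑ i, x i ^ 2) ^ 2 := by
    have hmp := EuclideanSpace.volume_preserving_symm_measurableEquiv_toLp (Fin 4)
    rw [← hmp.setIntegral_preimage_emb (MeasurableEquiv.measurableEmbedding _)
      (fun x => Real.sin (a * x 0) ^ 2 / (∑ i, x i ^ 2) ^ 2) _]
    have hpre : (MeasurableEquiv.toLp 2 (Fin 4 → ℝ)).symm ⁻¹' {x : Fin 4 → ℝ | ∑ i, x i ^ 2 ≤ K ^ 2}
        = Metric.closedBall 0 K := by
      ext k
      simp only [Set.mem_preimage, Set.mem_setOf_eq, Metric.mem_closedBall, dist_zero_right,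
        EuclideanSpace.norm_eq]
      have hs : ∀ i : Fin 4, ‖k i‖ ^ 2 = k i ^ 2 := fun i => by
        rw [Real.norm_eq_abs, sq_abs]
      simp only [hs]
      rw [Real.sqrt_le_iff]
      constructor
      · intro h; exact ⟨hK.le, h⟩
      · intro h; exact h.2
    rw [hpre]
    apply setIntegral_congr_fun measurableSet_closedBall
    intro k _
    dsimp only
    have h4 : ‖k‖ ^ 4 = (∑ i, k i ^ 2) ^ 2 := by
      rw [EuclideanSpace.norm_eq]
      have hs : ∀ i : Fin 4, ‖k i‖ ^ 2 = k i ^ 2 := fun i => by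
        rw [Real.norm_eq_abs, sq_abs]
      simp only [hs]
      have h0 : (0:ℝ) ≤ ∑ i, k i ^ 2 := by positivity
      rw [show Real.sqrt (∑ i, k i ^ 2) ^ 4 = (Real.sqrt (∑ i, k i ^ 2) ^ 2) ^ 2 by ring,
        Real.sq_sqrt h0]
    rw [h4]
    congr 1
  -- Step 3: split off the first coordinate
  have step3 : (∫ x in {x : Fin 4 → ℝ | ∑ i, x i ^ 2 ≤ K ^ 2},
        Real.sin (a * x 0) ^ 2 / (∑ i, x i ^ 2) ^ 2)
      = ∫ p in {p : ℝ × (Fin 3 → ℝ) | p.1 ^ 2 + ∑ i, p.2 i ^ 2 ≤ K ^ 2}, Hfun a p := by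
    simp only [Hfun]
    have hmp := volume_preserving_piFinSuccAbove (fun _ : Fin 4 => ℝ) 0
    rw [← hmp.setIntegral_preimage_emb (MeasurableEquiv.measurableEmbedding _)
      (fun p => Real.sin (a * p.1) ^ 2 / (p.1 ^ 2 + ∑ i, p.2 i ^ 2) ^ 2) _]
    have key : ∀ x : Fin 4 → ℝ,
        (MeasurableEquiv.piFinSuccAbove (fun _ : Fin 4 => ℝ) 0 x).1 = x 0 ∧
        ∀ j, (MeasurableEquiv.piFinSuccAbove (fun _ : Fin 4 => ℝ) 0 x).2 j = x j.succ := by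
      intro x
      exact ⟨rfl, fun j => rfl⟩
    have hsum : ∀ x : Fin 4 → ℝ,
        (MeasurableEquiv.piFinSuccAbove (fun _ : Fin 4 => ℝ) 0 x).1 ^ 2
          + ∑ j, (MeasurableEquiv.piFinSuccAbove (fun _ : Fin 4 => ℝ) 0 x).2 j ^ 2
        = ∑ i, x i ^ 2 := by
      intro x
      rw [(key x).1]
      have hj : ∀ j : Fin 3, (MeasurableEquiv.piFinSuccAbove (fun _ : Fin 4 => ℝ) 0 x).2 j ^ 2
          = x ((0:Fin 4).succAbove j) ^ 2 := fun j => by rw [(key x).2 j]; rfl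
      simp only [hj]
      exact (Fin.sum_univ_succAbove (fun i => x i ^ 2) 0).symm
    have hpre : (MeasurableEquiv.piFinSuccAbove (fun _ : Fin 4 => ℝ) 0) ⁻¹'
        {p : ℝ × (Fin 3 → ℝ) | p.1 ^ 2 + ∑ i, p.2 i ^ 2 ≤ K ^ 2}
        = {x : Fin 4 → ℝ | ∑ i, x i ^ 2 ≤ K ^ 2} := by
      ext x
      simp only [Set.mem_preimage, Set.mem_setOf_eq, hsum x]
    rw [hpre]
    apply setIntegral_congr_fun
    · exact measurableSet_le (by fun_prop) measurable_const
    · intro x _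
      dsimp only
      rw [hsum x, (key x).1]
  rw [step1, step2, step3]
  exact dyadic_bound K a hK hu
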